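/- Suppose that ψ : ℝ^{n-k} × ℝ^k → ℝ^k is continuously differentiable and α, β : ℝ → ℝ are continuously differentiable. Let (x,y,t) be a point such that the partial derivative of ψ in the y-direction at (x,y), a linear map ℝ^k → ℝ^k, is invertible, and such that α(t)² + β(t)² > 0. Then the Fréchet derivative of ι_ψ at (x,y,t) is an injective linear map ℝ^{n+1} → ℝ^{n+k+1}; i.e. ι_ψ is an immersion at (x,y,t). -/

import Mathlib

noncomputable section

/-- The explicit map `ι_ψ (x, y, t) = (x, α(t)·y, β(t)·ψ(x,y), t)` from
`ℝ^{n-k} × ℝ^k × ℝ` to `ℝ^{n-k} × ℝ^k × ℝ^k × ℝ`. -/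
def iota {n k : ℕ}
    (ψ : EuclideanSpace ℝ (Fin (n - k)) × EuclideanSpace ℝ (Fin k) → EuclideanSpace ℝ (Fin k))
    (α β : ℝ → ℝ) :
    EuclideanSpace ℝ (Fin (n - k)) × EuclideanSpace ℝ (Fin k) × ℝ →
      EuclideanSpace ℝ (Fin (n - k)) × EuclideanSpace ℝ (Fin k) × EuclideanSpace ℝ (Fin k) × ℝ :=
  fun p => (p.1, α p.2.2 • p.2.1, β p.2.2 • ψ (p.1, p.2.1), p.2.2)

/-- If the partial derivative of `ψ` in the `y`-direction at `(x, y)` is invertible and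
`α(t)² + β(t)² > 0`, then the Fréchet derivative of `ι_ψ` at `(x, y, t)` is an injective
linear map, i.e. `ι_ψ` is an immersion at `(x, y, t)`. -/
theorem iota_fderiv_injective (n k : ℕ) (hk : 1 ≤ k) (hkn : k < n)
    (ψ : EuclideanSpace ℝ (Fin (n - k)) × EuclideanSpace ℝ (Fin k) → EuclideanSpace ℝ (Fin k))
    (α β : ℝ → ℝ)
    (hψ : ContDiff ℝ 1 ψ) (hα : ContDiff ℝ 1 α) (hβ : ContDiff ℝ 1 β)
    (x : EuclideanSpace ℝ (Fin (n - k))) (y : EuclideanSpace ℝ (Fin k)) (t : ℝ)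
    (hB : Function.Bijective ⇑(fderiv ℝ (fun y' => ψ (x, y')) y))
    (hab : (α t) ^ 2 + (β t) ^ 2 > 0) :
    Function.Injective ⇑(fderiv ℝ (iota ψ α β) (x, y, t)) := by
  classical
  let E1 := EuclideanSpace ℝ (Fin (n - k))
  let E2 := EuclideanSpace ℝ (Fin k)
  let prFst : (E1 × E2 × ℝ) →L[ℝ] E1 := ContinuousLinearMap.fst ℝ E1 (E2 × ℝ)
  let prSnd : (E1 × E2 × ℝ) →L[ℝ] E2 × ℝ := ContinuousLinearMap.snd ℝ E1 (E2 × ℝ)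
  let prY : (E1 × E2 × ℝ) →L[ℝ] E2 := (ContinuousLinearMap.fst ℝ E2 ℝ).comp prSnd
  let prT : (E1 × E2 × ℝ) →L[ℝ] ℝ := (ContinuousLinearMap.snd ℝ E2 ℝ).comp prSnd
  let incl : (E1 × E2 × ℝ) →L[ℝ] E1 × E2 := prFst.prod prY
  set Dψ := fderiv ℝ ψ (x, y) with hDψ
  have hψd : HasFDerivAt ψ Dψ (x, y) := (hψ.differentiable one_ne_zero _).hasFDerivAt
  have hαd : HasFDerivAt α (fderiv ℝ α t) t := (hα.differentiable one_ne_zero t).hasFDerivAt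
  have hβd : HasFDerivAt β (fderiv ℝ β t) t := (hβ.differentiable one_ne_zero t).hasFDerivAt
  have hprT : HasFDerivAt (fun p : E1 × E2 × ℝ => p.2.2) prT (x, y, t) := prT.hasFDerivAt
  have hprY : HasFDerivAt (fun p : E1 × E2 × ℝ => p.2.1) prY (x, y, t) := prY.hasFDerivAt
  have hincl : HasFDerivAt (fun p : E1 × E2 × ℝ => (p.1, p.2.1)) incl (x, y, t) :=
    incl.hasFDerivAt
  have hαT : HasFDerivAt (fun p : E1 × E2 × ℝ => α p.2.2) ((fderiv ℝ α t).comp prT) (x, y, t) :=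
    hαd.comp _ hprT
  have hβT : HasFDerivAt (fun p : E1 × E2 × ℝ => β p.2.2) ((fderiv ℝ β t).comp prT) (x, y, t) :=
    hβd.comp _ hprT
  have hψc : HasFDerivAt (ψ ∘ fun p : E1 × E2 × ℝ => (p.1, p.2.1)) (Dψ.comp incl) (x, y, t) :=
    hψd.comp ((x, y, t) : E1 × E2 × ℝ) hincl
  have h2 : HasFDerivAt (fun p : E1 × E2 × ℝ => α p.2.2 • p.2.1)
      (α t • prY + ((fderiv ℝ α t).comp prT).smulRight y) (x, y, t) := hαT.smul hprY
  have h3 : HasFDerivAt (fun p : E1 × E2 × ℝ => β p.2.2 • ψ (p.1, p.2.1))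
      (β t • (Dψ.comp incl) + ((fderiv ℝ β t).comp prT).smulRight (ψ (x, y))) (x, y, t) :=
    hβT.smul hψc
  set L := prFst.prod ((α t • prY + ((fderiv ℝ α t).comp prT).smulRight y).prod
      ((β t • (Dψ.comp incl) + ((fderiv ℝ β t).comp prT).smulRight (ψ (x, y))).prod prT))
    with hL
  have hI : HasFDerivAt (iota ψ α β) L (x, y, t) := by
    exact HasFDerivAt.prodMk prFst.hasFDerivAt (HasFDerivAt.prodMk h2 (HasFDerivAt.prodMk h3 prT.hasFDerivAt))
  rw [hI.fderiv]
  -- relation between partial derivative and full derivative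
  have hBrel : ∀ v : E2, fderiv ℝ (fun y' => ψ (x, y')) y v = Dψ (0, v) := by
    intro v
    have hxy : HasFDerivAt (fun y' : E2 => ((x : E1), y'))
        ((0 : E2 →L[ℝ] E1).prod (ContinuousLinearMap.id ℝ E2)) y :=
      HasFDerivAt.prodMk (hasFDerivAt_const x y) (hasFDerivAt_id y)
    have hcomp : HasFDerivAt (fun y' => ψ (x, y'))
        (Dψ.comp ((0 : E2 →L[ℝ] E1).prod (ContinuousLinearMap.id ℝ E2))) y :=
      hψd.comp y hxy
    rw [hcomp.fderiv]
    simp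
    rfl
  have key : ∀ w : E1 × E2 × ℝ, L w = 0 → w = 0 := by
    rintro ⟨u, v, s⟩ hw
    rw [hL] at hw
    simp only [ContinuousLinearMap.prod_apply, ContinuousLinearMap.add_apply,
      ContinuousLinearMap.coe_smul', Pi.smul_apply, ContinuousLinearMap.smulRight_apply,
      ContinuousLinearMap.coe_comp', Function.comp_apply, ContinuousLinearMap.coe_fst',
      ContinuousLinearMap.coe_snd', Prod.mk_eq_zero] at hw
    obtain ⟨hu, hv, hw3, hs⟩ := hw
    have hu' : u = 0 := hu
    have hs' : s = 0 := hs
    subst hu' hs'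
    rw [show incl ((0 : E1), v, (0 : ℝ)) = ((0 : E1), v) from rfl] at hw3
    rw [show prT ((0 : E1), v, (0 : ℝ)) = (0 : ℝ) from rfl,
      show prY ((0 : E1), v, (0 : ℝ)) = v from rfl] at hv
    rw [show prT ((0 : E1), v, (0 : ℝ)) = (0 : ℝ) from rfl] at hw3
    simp only [map_zero, zero_smul, add_zero] at hv hw3
    suffices hv0 : v = 0 by subst hv0; rfl
    by_cases hat : α t = 0
    · have hbt : β t ≠ 0 := by
        intro hbt
        rw [hat, hbt] at hab
        norm_num at hab
      have : Dψ (0, v) = 0 := by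
        rcases smul_eq_zero.mp hw3 with h | h
        · exact absurd h hbt
        · exact h
      have hB0 : fderiv ℝ (fun y' => ψ (x, y')) y v = 0 := by rw [hBrel v, this]
      have h00 : (fderiv ℝ (fun y' => ψ (x, y')) y) v
          = (fderiv ℝ (fun y' => ψ (x, y')) y) 0 := by rw [hB0, map_zero]
      exact hB.injective h00
    · rcases smul_eq_zero.mp hv with h | h
      · exact absurd h hat
      · exact h
  intro a b hab'
  have := key (a - b) (by rw [map_sub, hab', sub_self])
  exact sub_eq_zero.mp this
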